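/- Let P and Q be finite p-groups in CP₂ of the same order p^n. Then ψ(P) = ψ(Q) if and only if there is a bijection f : P → Q with o(f(x)) = o(x) for all x ∈ P. -/

import Mathlib

set_option linter.unusedSectionVars false

/-- Sum of the orders of the elements of a group. -/
noncomputable def psi (G : Type*) [Group G] : ℕ := ∑ᶠ x : G, orderOf x

/-- `Omega p G i` is the subgroup generated by all `x` with `x ^ p ^ i = 1`. -/
def Omega (p : ℕ) (G : Type*) [Group G] (i : ℕ) : Subgroup G :=
  Subgroup.closure {x : G | x ^ p ^ i = 1}

/-- The class `CP₂`: `o(xy) ≤ max (o x) (o y)` for all `x y`. -/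
def CP2 (G : Type*) [Group G] : Prop :=
  ∀ x y : G, orderOf (x * y) ≤ max (orderOf x) (orderOf y)


lemma geom_aux {p : ℕ} (hp : 2 ≤ p) :
    ∀ n k, k ≤ n → (p - 1) * (∑ i ∈ Finset.Ico k n, p ^ i) + p ^ k = p ^ n := by
  intro n
  induction n with
  | zero => intro k hk; interval_cases k; simp
  | succ m ih =>
    intro k hk
    rcases Nat.lt_or_ge k (m+1) with h | h
    · have hkm : k ≤ m := by omega
      rw [Finset.sum_Ico_succ_top hkm, Nat.mul_add]
      have := ih k hkm
      have h1 : (p - 1) * p ^ m + p ^ m = p ^ (m+1) := by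
        have h2 : (p - 1) * p ^ m + p ^ m = (p - 1 + 1) * p ^ m := by ring
        rw [h2, Nat.sub_add_cancel (by omega), pow_succ, mul_comm]
      omega
    · have : k = m + 1 := by omega
      subst this; simp

lemma sum_pow_lt {p : ℕ} (hp : 2 ≤ p) (m : ℕ) : ∑ i ∈ Finset.range m, p ^ i < p ^ m := by
  induction m with
  | zero => simp
  | succ k ih =>
    rw [Finset.sum_range_succ, pow_succ]
    have : 2 * p ^ k ≤ p ^ k * p := by
      rw [mul_comm]
      exact Nat.mul_le_mul_left _ hp
    have hpk : 0 < p ^ k := Nat.pow_pos (by omega)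
    omega

lemma pow_sum_inj {p : ℕ} (hp : 2 ≤ p) :
    ∀ n (e e' : ℕ → ℕ),
    (∀ i j, i < j → j < n → e i < e j) → (∀ i j, i < j → j < n → e' i < e' j) →
    (∑ i ∈ Finset.range n, p ^ e i) = (∑ i ∈ Finset.range n, p ^ e' i) →
    ∀ i < n, e i = e' i := by
  intro n
  induction n with
  | zero => intro _ _ _ _ _ i hi; omega
  | succ m ih =>
    intro e e' he he' hsum
    -- bound : for strictly increasing f, the partial sum is < p ^ f m
    have bound : ∀ f : ℕ → ℕ, (∀ i j, i < j → j < m + 1 → f i < f j) →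
        ∑ i ∈ Finset.range m, p ^ f i < p ^ f m := by
      intro f hf
      have hinj : ∀ x ∈ Finset.range m, ∀ y ∈ Finset.range m, f x = f y → x = y := by
        intro x hx y hy hxy
        simp only [Finset.mem_range] at hx hy
        by_contra hne
        rcases Nat.lt_or_ge x y with h | h
        · exact absurd hxy (Nat.ne_of_lt (hf x y h (by omega)))
        · have : x ≠ y := hne
          have : y < x := by omega
          exact absurd hxy.symm (Nat.ne_of_lt (hf y x this (by omega)))
      calc ∑ i ∈ Finset.range m, p ^ f i
          = ∑ j ∈ (Finset.range m).image f, p ^ j := (Finset.sum_image hinj).symm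
        _ ≤ ∑ j ∈ Finset.range (f m), p ^ j := by
            apply Finset.sum_le_sum_of_subset
            intro j hj
            simp only [Finset.mem_image, Finset.mem_range] at hj ⊢
            obtain ⟨i, hi, rfl⟩ := hj
            exact hf i m hi (by omega)
        _ < p ^ f m := sum_pow_lt hp _
    have htop : e m = e' m := by
      by_contra hne
      have key : ∀ f g : ℕ → ℕ, (∀ i j, i < j → j < m + 1 → f i < f j) →
          (∀ i j, i < j → j < m + 1 → g i < g j) →
          (∑ i ∈ Finset.range (m+1), p ^ f i) = (∑ i ∈ Finset.range (m+1), p ^ g i) →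
          f m < g m → False := by
        intro f g hf hg hs hlt
        have h1 : ∑ i ∈ Finset.range (m+1), p ^ f i < p ^ (f m + 1) := by
          rw [Finset.sum_range_succ, pow_succ]
          have := bound f hf
          have hpk : 0 < p ^ f m := Nat.pow_pos (by omega)
          nlinarith
        have h2 : p ^ g m ≤ ∑ i ∈ Finset.range (m+1), p ^ g i := by
          rw [Finset.sum_range_succ]; omega
        have h3 : p ^ (f m + 1) ≤ p ^ g m := Nat.pow_le_pow_right (by omega) (by omega)
        omega
      rcases Nat.lt_or_ge (e m) (e' m) with h | h
      · exact key e e' he he' hsum h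
      · exact key e' e he' he hsum.symm (by omega)
    intro i hi
    rcases Nat.lt_or_ge i m with him | him
    · refine ih e e' (fun a b hab hb => he a b hab (by omega))
        (fun a b hab hb => he' a b hab (by omega)) ?_ i him
      rw [Finset.sum_range_succ, Finset.sum_range_succ, htop] at hsum
      omega
    · have : i = m := by omega
      subst this; exact htop

noncomputable def Ncnt (p : ℕ) (G : Type*) [Group G] (i : ℕ) : ℕ := Nat.card {x : G // x ^ p ^ i = 1}

section grp
variable {p n : ℕ} {G : Type*} [Group G] [Finite G]
variable (hp : p.Prime) (hG : IsPGroup p G) (hcard : Nat.card G = p ^ n)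

include hp hG hcard

lemma order_pow (x : G) : ∃ k ≤ n, orderOf x = p ^ k := by
  have : Fact p.Prime := ⟨hp⟩
  obtain ⟨k, hk⟩ := (IsPGroup.iff_orderOf.mp hG) x
  have hdvd : p ^ k ∣ p ^ n := by
    rw [← hk, ← hcard]; exact orderOf_dvd_natCard x
  exact ⟨k, (Nat.pow_dvd_pow_iff_le_right hp.one_lt).mp hdvd, hk⟩

lemma cond_iff (x : G) {k : ℕ} (hk : orderOf x = p ^ k) (i : ℕ) :
    x ^ p ^ i = 1 ↔ k ≤ i := by
  rw [← orderOf_dvd_iff_pow_eq_one, hk, Nat.pow_dvd_pow_iff_le_right hp.one_lt]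

lemma psi_identity [Fintype G] :
    (∑ x : G, orderOf x) + (p - 1) * ∑ i ∈ Finset.range n, Ncnt p G i * p ^ i
      = p ^ (2 * n) := by
  classical
  have hp2 : 2 ≤ p := hp.two_le
  have key : ∀ x : G, orderOf x +
      (p - 1) * ∑ i ∈ Finset.range n, (if x ^ p ^ i = 1 then p ^ i else 0) = p ^ n := by
    intro x
    obtain ⟨k, hkn, hk⟩ := order_pow hp hG hcard x
    have hinner : ∑ i ∈ Finset.range n, (if x ^ p ^ i = 1 then p ^ i else 0)
        = ∑ i ∈ Finset.Ico k n, p ^ i := by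
      calc ∑ i ∈ Finset.range n, (if x ^ p ^ i = 1 then p ^ i else 0)
          = ∑ i ∈ Finset.range n, (if k ≤ i then p ^ i else 0) := by
            refine Finset.sum_congr rfl fun i _ => ?_
            rw [if_congr (cond_iff hp hG hcard x hk i) rfl rfl]
        _ = ∑ i ∈ (Finset.range n).filter (fun i => k ≤ i), p ^ i :=
            (Finset.sum_filter _ _).symm
        _ = ∑ i ∈ Finset.Ico k n, p ^ i := by
            congr 1; ext j
            simp only [Finset.mem_filter, Finset.mem_range, Finset.mem_Ico]
            omega
    rw [hinner, hk]
    have := geom_aux hp2 n k hkn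
    omega
  have htot : ∑ x : G, (orderOf x +
      (p - 1) * ∑ i ∈ Finset.range n, (if x ^ p ^ i = 1 then p ^ i else 0))
      = p ^ (2 * n) := by
    rw [Finset.sum_congr rfl (fun x _ => key x), Finset.sum_const, smul_eq_mul]
    have : Fintype.card G = p ^ n := by rw [← Nat.card_eq_fintype_card, hcard]
    rw [Finset.card_univ, this, ← pow_add, two_mul]
  rw [Finset.sum_add_distrib, ← Finset.mul_sum, Finset.sum_comm] at htot
  have hswap : ∀ i, (∑ x : G, if x ^ p ^ i = 1 then p ^ i else 0)
      = Ncnt p G i * p ^ i := by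
    intro i
    rw [← Finset.sum_filter, Finset.sum_const, smul_eq_mul]
    congr 1
    rw [Ncnt, Nat.card_eq_fintype_card, Fintype.card_subtype]
  rw [Finset.sum_congr rfl (fun i _ => hswap i)] at htot
  exact htot

variable (hcp : CP2 G)
include hcp

lemma Ncnt_dvd (i : ℕ) : Ncnt p G i ∣ p ^ n := by
  have hpos : 0 < p ^ i := Nat.pow_pos hp.pos
  let H : Subgroup G :=
    { carrier := {x : G | x ^ p ^ i = 1}
      one_mem' := one_pow _
      mul_mem' := by
        intro a b ha hb
        simp only [Set.mem_setOf_eq] at ha hb ⊢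
        rw [← orderOf_dvd_iff_pow_eq_one] at ha hb ⊢
        obtain ⟨k, _, hk⟩ := order_pow hp hG hcard (a * b)
        have h1 : orderOf (a * b) ≤ p ^ i :=
          le_trans (hcp a b) (max_le (Nat.le_of_dvd hpos ha) (Nat.le_of_dvd hpos hb))
        rw [hk] at h1 ⊢
        exact (Nat.pow_dvd_pow_iff_le_right hp.one_lt).mpr
          ((Nat.pow_le_pow_iff_right hp.one_lt).mp h1)
      inv_mem' := by
        intro a ha
        simp only [Set.mem_setOf_eq] at ha ⊢
        rw [inv_pow, ha, inv_one] }
  have : Ncnt p G i = Nat.card H := rfl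
  rw [this, ← hcard]
  exact Subgroup.card_subgroup_dvd_card H

omit hcp

lemma Ncnt_mono {i j : ℕ} (hij : i ≤ j) : Ncnt p G i ≤ Ncnt p G j := by
  apply Nat.card_le_card_of_injective
    (fun x : {x : G // x ^ p ^ i = 1} =>
      (⟨x.1, by
        have : (p : ℕ) ^ j = p ^ i * p ^ (j - i) := by
          rw [← pow_add]; congr 1; omega
        rw [this, pow_mul, x.2, one_pow]⟩ : {x : G // x ^ p ^ j = 1}))
  intro a b hab
  simpa [Subtype.ext_iff] using hab

lemma Ncnt_top : Ncnt p G n = p ^ n := by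
  rw [Ncnt, Nat.card_congr (Equiv.subtypeUnivEquiv fun x => by
    rw [← hcard]; exact pow_card_eq_one'), hcard]

lemma fib_step (i : ℕ) :
    Nat.card {x : G // orderOf x = p ^ (i + 1)} + Ncnt p G i = Ncnt p G (i + 1) := by
  classical
  have : Fintype G := Fintype.ofFinite G
  have hiff : ∀ x : G, x ^ p ^ (i + 1) = 1 ↔
      (orderOf x = p ^ (i + 1) ∨ x ^ p ^ i = 1) := by
    intro x
    obtain ⟨k, hkn, hk⟩ := order_pow hp hG hcard x
    rw [cond_iff hp hG hcard x hk, cond_iff hp hG hcard x hk, hk]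
    constructor
    · intro h
      rcases Nat.lt_or_ge k (i + 1) with h' | h'
      · right; omega
      · left; congr 1; omega
    · rintro (h | h)
      · have := Nat.pow_right_injective hp.two_le h
        omega
      · omega
  rw [Ncnt, Ncnt, Nat.card_eq_fintype_card, Nat.card_eq_fintype_card,
    Nat.card_eq_fintype_card, Fintype.card_subtype, Fintype.card_subtype,
    Fintype.card_subtype]
  rw [show (Finset.univ.filter fun x : G => x ^ p ^ (i+1) = 1)
      = Finset.univ.filter fun x : G => (orderOf x = p ^ (i+1) ∨ x ^ p ^ i = 1) by
    refine Finset.filter_congr fun x _ => ?_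
    simp only [hiff x]]
  rw [Finset.filter_or, Finset.card_union_of_disjoint]
  rw [Finset.disjoint_left]
  intro x hx hx'
  simp only [Finset.mem_filter] at hx hx'
  have h1 : orderOf x ∣ p ^ i := orderOf_dvd_of_pow_eq_one hx'.2
  rw [hx.2, Nat.pow_dvd_pow_iff_le_right hp.one_lt] at h1
  omega

omit hp hG hcard in
lemma fib_zero : Nat.card {x : G // orderOf x = p ^ 0} = Ncnt p G 0 := by
  rw [Ncnt]
  exact Nat.card_congr (Equiv.subtypeEquivRight fun x => by
    simp [orderOf_eq_one_iff])

end grp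

theorem stmt_12 {p n : ℕ} (hp : p.Prime) (P Q : Type*) [Group P] [Finite P]
    [Group Q] [Finite Q] (hPp : IsPGroup p P) (hQp : IsPGroup p Q)
    (hcpP : CP2 P) (hcpQ : CP2 Q)
    (hcardP : Nat.card P = p ^ n) (hcardQ : Nat.card Q = p ^ n) :
    psi P = psi Q ↔ ∃ f : P ≃ Q, ∀ x : P, orderOf (f x) = orderOf x := by
  constructor
  · intro hpsi
    classical
    have hp2 : 2 ≤ p := hp.two_le
    have : Fintype P := Fintype.ofFinite P
    have : Fintype Q := Fintype.ofFinite Q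
    rw [psi, psi, finsum_eq_sum_of_fintype, finsum_eq_sum_of_fintype] at hpsi
    have hIP := psi_identity (n := n) hp hPp hcardP (G := P)
    have hIQ := psi_identity (n := n) hp hQp hcardQ (G := Q)
    have hsum : ∑ i ∈ Finset.range n, Ncnt p P i * p ^ i
        = ∑ i ∈ Finset.range n, Ncnt p Q i * p ^ i := by
      apply Nat.eq_of_mul_eq_mul_left (show 0 < p - 1 by omega)
      omega
    have hpowP : ∀ i, p ^ Nat.log p (Ncnt p P i) = Ncnt p P i := by
      intro i
      obtain ⟨b, _, hbe⟩ := (Nat.dvd_prime_pow hp).mp (Ncnt_dvd hp hPp hcardP hcpP i)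
      rw [hbe, Nat.log_pow hp.one_lt]
    have hpowQ : ∀ i, p ^ Nat.log p (Ncnt p Q i) = Ncnt p Q i := by
      intro i
      obtain ⟨b, _, hbe⟩ := (Nat.dvd_prime_pow hp).mp (Ncnt_dvd hp hQp hcardQ hcpQ i)
      rw [hbe, Nat.log_pow hp.one_lt]
    set eP : ℕ → ℕ := fun i => Nat.log p (Ncnt p P i) + i with heP
    set eQ : ℕ → ℕ := fun i => Nat.log p (Ncnt p Q i) + i with heQ
    have hePval : ∀ i, p ^ eP i = Ncnt p P i * p ^ i := fun i => by
      rw [heP]; simp only []; rw [pow_add, hpowP]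
    have heQval : ∀ i, p ^ eQ i = Ncnt p Q i * p ^ i := fun i => by
      rw [heQ]; simp only []; rw [pow_add, hpowQ]
    have hmonoP : ∀ i j, i < j → j < n → eP i < eP j := by
      intro i j hij _
      have := Nat.log_mono_right (b := p) (Ncnt_mono hp hPp hcardP (le_of_lt hij))
      simp only [heP]; omega
    have hmonoQ : ∀ i j, i < j → j < n → eQ i < eQ j := by
      intro i j hij _
      have := Nat.log_mono_right (b := p) (Ncnt_mono hp hQp hcardQ (le_of_lt hij))
      simp only [heQ]; omega
    have hee : ∀ i < n, eP i = eQ i := by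
      apply pow_sum_inj hp2 n eP eQ hmonoP hmonoQ
      rw [Finset.sum_congr rfl fun i _ => hePval i,
        Finset.sum_congr rfl fun i _ => heQval i]
      exact hsum
    have hNeq : ∀ i ≤ n, Ncnt p P i = Ncnt p Q i := by
      intro i hi
      rcases eq_or_lt_of_le hi with h | h
      · subst h; rw [Ncnt_top hp hPp hcardP, Ncnt_top hp hQp hcardQ]
      · have h1 := hePval i
        have h2 := heQval i
        rw [hee i h] at h1
        have := h1.symm.trans h2
        exact Nat.eq_of_mul_eq_mul_right (Nat.pow_pos hp.pos) this
    have hfib : ∀ d, Nat.card {x : P // orderOf x = d}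
        = Nat.card {y : Q // orderOf y = d} := by
      intro d
      by_cases hd : ∃ k ≤ n, d = p ^ k
      · obtain ⟨k, hk, rfl⟩ := hd
        cases k with
        | zero =>
          rw [fib_zero (p := p), fib_zero (p := p), hNeq 0 (by omega)]
        | succ i =>
          have h1 := fib_step hp hPp hcardP i
          have h2 := fib_step hp hQp hcardQ i
          have h3 := hNeq i (by omega)
          have h4 := hNeq (i + 1) hk
          omega
      · have hP : IsEmpty {x : P // orderOf x = d} := by
          refine ⟨fun x => ?_⟩
          obtain ⟨k, hk, hke⟩ := order_pow hp hPp hcardP x.1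
          exact hd ⟨k, hk, by rw [← x.2, hke]⟩
        have hQ : IsEmpty {y : Q // orderOf y = d} := by
          refine ⟨fun y => ?_⟩
          obtain ⟨k, hk, hke⟩ := order_pow hp hQp hcardQ y.1
          exact hd ⟨k, hk, by rw [← y.2, hke]⟩
        rw [Nat.card_of_isEmpty, Nat.card_of_isEmpty]
    have hne : ∀ d, Nonempty ({x : P // orderOf x = d} ≃ {y : Q // orderOf y = d}) :=
      fun d => Finite.card_eq.mp (hfib d)
    let g : ∀ d, {x : P // orderOf x = d} ≃ {y : Q // orderOf y = d} :=
      fun d => (hne d).some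
    refine ⟨(Equiv.sigmaFiberEquiv (orderOf : P → ℕ)).symm.trans
      ((Equiv.sigmaCongrRight g).trans (Equiv.sigmaFiberEquiv (orderOf : Q → ℕ))), ?_⟩
    intro x
    exact (g (orderOf x) ⟨x, rfl⟩).2
  · rintro ⟨f, hf⟩
    exact finsum_eq_of_bijective f f.bijective fun x => (hf x).symm
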